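/- For every bracket worm a ∈ W_() with a ≠ ⊤ and every n ∈ ℕ, a{n} ◁ a, i.e. a ⊢_BC (⊤)(a{n}). -/

import Mathlib

open Ordinal

universe u v

/-- `derivBFamily` was removed from Mathlib; restored here with its old definition. -/
noncomputable def derivBFamily (o : Ordinal.{u}) (f : ∀ b < o, Ordinal.{max u v} → Ordinal.{max u v}) :
    Ordinal.{max u v} → Ordinal.{max u v} :=
  derivFamily (familyOfBFamily o f)

/-- The binary Veblen function: `veblen 0 β = ω ^ β` and, for `α > 0`, `veblen α`
enumerates the common fixed points of the functions `veblen ξ` for `ξ < α`. -/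
noncomputable def veblen (α : Ordinal.{0}) : Ordinal.{0} → Ordinal.{0} :=
  if α = 0 then fun β => omega0 ^ β
  else derivBFamily.{0, 0} α fun ξ h => veblen ξ
termination_by α
decreasing_by exact h

/-- The Feferman–Schütte ordinal `Γ₀`: the least nonzero ordinal closed under the
binary Veblen function. -/
noncomputable def Gamma0 : Ordinal.{0} :=
  sInf {L | 0 < L ∧ ∀ α < L, ∀ β < L, _root_.veblen α β < L}

/-- Strictly positive modal formulas with modalities indexed by ordinals. -/
inductive RCF : Type 1 where
  | top : RCF
  | var : ℕ → RCF
  | and : RCF → RCF → RCF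
  | dia : Ordinal.{0} → RCF → RCF

/-- `φ.bounded Λ` holds iff all modalities occurring in `φ` are `< Λ`,
i.e. iff `φ` is an `RC_Λ`-formula. -/
def RCF.bounded (Λ : Ordinal) : RCF → Prop
  | .top => True
  | .var _ => True
  | .and φ ψ => φ.bounded Λ ∧ ψ.bounded Λ
  | .dia α φ => α < Λ ∧ φ.bounded Λ

/-- Worms: formulas built from `⊤` by prefixing modalities. -/
def RCF.isWorm : RCF → Prop
  | .top => True
  | .var _ => False
  | .and _ _ => False
  | .dia _ φ => φ.isWorm

/-- The signature of a formula: the set of ordinals occurring in its modalities. -/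
def RCF.sig : RCF → Set Ordinal
  | .top => ∅
  | .var _ => ∅
  | .and φ ψ => φ.sig ∪ ψ.sig
  | .dia α φ => insert α φ.sig

/-- Derivability in the reflection calculus `RC_Λ`. -/
inductive RCder (Λ : Ordinal) : RCF → RCF → Prop where
  | id : ∀ φ, φ.bounded Λ → RCder Λ φ φ
  | topI : ∀ φ, φ.bounded Λ → RCder Λ φ .top
  | andE₁ : ∀ φ ψ, φ.bounded Λ → ψ.bounded Λ → RCder Λ (.and φ ψ) φ
  | andE₂ : ∀ φ ψ, φ.bounded Λ → ψ.bounded Λ → RCder Λ (.and φ ψ) ψ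
  | diaTrans : ∀ α φ, α < Λ → φ.bounded Λ → RCder Λ (.dia α (.dia α φ)) (.dia α φ)
  | diaDown : ∀ α β φ, β < α → α < Λ → φ.bounded Λ → RCder Λ (.dia α φ) (.dia β φ)
  | diaConj : ∀ α β φ ψ, β < α → α < Λ → φ.bounded Λ → ψ.bounded Λ →
      RCder Λ (.and (.dia α φ) (.dia β ψ)) (.dia α (.and φ (.dia β ψ)))
  | andI : ∀ {φ ψ χ}, RCder Λ φ ψ → RCder Λ φ χ → RCder Λ φ (.and ψ χ)
  | cut : ∀ {φ ψ χ}, RCder Λ φ ψ → RCder Λ ψ χ → RCder Λ φ χ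
  | diaMono : ∀ {φ ψ} (α), α < Λ → RCder Λ φ ψ → RCder Λ (.dia α φ) (.dia α ψ)

/-- Membership in `W_{Γ₀}`: worms of `RC_{Γ₀}`. -/
def isGWorm (A : RCF) : Prop := A.isWorm ∧ A.bounded Gamma0

/-- `WormLT B A` is the consistency ordering `B <₀ A` on worms of `W_{Γ₀}`:
`A ⊢_{RC_{Γ₀}} ⟨0⟩B`. -/
def WormLT (B A : RCF) : Prop :=
  isGWorm A ∧ isGWorm B ∧ RCder Gamma0 A (.dia 0 B)

/- The order type `o A` of a worm, defined recursively by
`o A = sup_{B <₀ A} (o B + 1)` (well-defined since `<₀` is well-founded). -/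
open Classical in
noncomputable def wormO (A : RCF) : Ordinal.{0} :=
  if h : WellFounded WormLT then
    h.fix (C := fun _ => Ordinal.{0})
      (fun B ih => ⨆ C : {C : RCF // WormLT C B}, (ih C.1 C.2 + 1)) A
  else 0

/-- Bracket worms `W_()`: `⊤ ∈ W_()` and `(a)b ∈ W_()` for `a, b ∈ W_()`.
`BW.cons a b` denotes `(a)b`. -/
inductive BW : Type where
  | top : BW
  | cons : BW → BW → BW
deriving DecidableEq

/-- The translation `* : W_() → W_{Γ₀}`: `⊤* = ⊤` and `((a)b)* = ⟨o(a*)⟩ b*`. -/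
noncomputable def BW.star : BW → RCF
  | .top => .top
  | .cons a b => .dia (wormO a.star) b.star

/-- `o*(a) = o(a*)`. -/
noncomputable def ostar (a : BW) : Ordinal.{0} := wormO a.star

/-- BC-formulas `F_()`. `BCF.dia a φ` denotes `(a)φ`. -/
inductive BCF : Type where
  | top : BCF
  | var : ℕ → BCF
  | and : BCF → BCF → BCF
  | dia : BW → BCF → BCF

/-- A bracket worm regarded as a BC-formula. -/
def BW.toF : BW → BCF
  | .top => .top
  | .cons a b => .dia a b.toF

/-- Derivability in the Bracket Calculus `BC`.  The side conditions `b ⊴ a`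
(`a ⊢ (⊤)b` or `a ⊢ b`) and `b ◁ a` (`a ⊢ (⊤)b`) are inlined, the two
disjuncts of `⊴` being split into separate constructors. -/
inductive BCder : BCF → BCF → Prop where
  | id : ∀ φ, BCder φ φ
  | topI : ∀ φ, BCder φ .top
  | andE₁ : ∀ φ ψ, BCder (.and φ ψ) φ
  | andE₂ : ∀ φ ψ, BCder (.and φ ψ) ψ
  | andI : ∀ {φ ψ χ}, BCder φ ψ → BCder φ χ → BCder φ (.and ψ χ)
  | cut : ∀ {φ ψ χ}, BCder φ ψ → BCder ψ χ → BCder φ χ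
  | mono₁ : ∀ {φ ψ} (a b : BW), BCder φ ψ → BCder a.toF (.dia .top b.toF) →
      BCder (.dia a φ) (.dia b ψ)
  | mono₂ : ∀ {φ ψ} (a b : BW), BCder φ ψ → BCder a.toF b.toF →
      BCder (.dia a φ) (.dia b ψ)
  | trans₁ : ∀ {φ ψ} (a b : BW), BCder φ ψ → BCder a.toF (.dia .top b.toF) →
      BCder (.dia a (.dia b φ)) (.dia b ψ)
  | trans₂ : ∀ {φ ψ} (a b : BW), BCder φ ψ → BCder a.toF b.toF →
      BCder (.dia a (.dia b φ)) (.dia b ψ)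
  | conj : ∀ {φ ψ} (a b : BW), BCder a.toF (.dia .top b.toF) →
      BCder (.and (.dia a φ) (.dia b ψ)) (.dia a (.and φ (.dia b ψ)))

/-- `bcLT b a` is `b ◁ a`, i.e. `a ⊢_BC (⊤)b`. -/
def bcLT (b a : BW) : Prop := BCder a.toF (.dia .top b.toF)

/-- `bcLE b a` is `b ⊴ a`, i.e. `a ⊢_BC (⊤)b` or `a ⊢_BC b`. -/
def bcLE (b a : BW) : Prop := bcLT b a ∨ BCder a.toF b.toF

/-- The list `[a₁, ..., a_m]` of components of the bracket worm `(a₁)...(a_m)⊤`. -/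
def BW.toList : BW → List BW
  | .top => []
  | .cons a b => a :: b.toList

/-- The bracket worm `(a₁)...(a_m)⊤` with components `[a₁, ..., a_m]`. -/
def BW.ofList : List BW → BW
  | [] => .top
  | a :: l => .cons a (ofList l)

open Classical in
/- Fundamental sequences for bracket worms.  For `a = (a₁)(a₂)...(a_m)`:
`⊤{n} = ⊤`; if `a₁ = ⊤` then `a{n} = (a₂)...(a_m)`; otherwise, with `ℓ` least
such that `a_ℓ ◁ a₁` (and `ℓ = m + 1` if there is none),
`b = (a₁{n})(a₂)...(a_{ℓ-1})`, `c = (a_ℓ)...(a_m)`, we set `a{n} = b^{n+1} c`. -/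
noncomputable def BW.fs : BW → ℕ → BW
  | .top, _ => .top
  | .cons a₁ rest, n =>
    if a₁ = .top then rest
    else
      let L := rest.toList
      let j := if h : ∃ i, i < L.length ∧ bcLT (L.getD i .top) a₁ then Nat.find h
               else L.length
      BW.ofList ((List.replicate (n + 1) (BW.fs a₁ n :: L.take j)).flatten ++ L.drop j)
termination_by a _ => a

/-- Iterated fundamental sequences on bracket worms:
`a⟦0⟧ = a`, `a⟦n+1⟧ = a⟦n⟧{n+1}`. -/
noncomputable def BW.fsIter (a : BW) : ℕ → BW
  | 0 => a
  | n + 1 => (a.fsIter n).fs (n + 1)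


/- ===== Auxiliary development: linearity of the bracket-worm ordering and
   the fundamental-sequence lemma ===== -/
section BCAux

/-- `LF [a₁,...,ak] φ = (a₁)...(ak)φ`. -/
def LF : List BW → BCF → BCF
  | [], φ => φ
  | a :: l, φ => .dia a (LF l φ)

lemma LF_append (L₁ L₂ : List BW) (φ : BCF) : LF (L₁ ++ L₂) φ = LF L₁ (LF L₂ φ) := by
  induction L₁ with
  | nil => rfl
  | cons a l ih => simp [LF, ih]

lemma toF_LF (a : BW) : a.toF = LF a.toList .top := by
  induction a with
  | top => rfl
  | cons a b iha ihb => simp [BW.toF, BW.toList, LF, ihb]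

@[simp] lemma toList_ofList (L : List BW) : (BW.ofList L).toList = L := by
  induction L with
  | nil => rfl
  | cons a l ih => simp [BW.ofList, BW.toList, ih]

lemma ofList_toList (a : BW) : BW.ofList a.toList = a := by
  induction a with
  | top => rfl
  | cons a b iha ihb => simp [BW.ofList, BW.toList, ihb]

/-- size of a bracket worm -/
def BW.sz : BW → ℕ
  | .top => 0
  | .cons a b => a.sz + b.sz + 1

lemma sz_ofList (L : List BW) : (BW.ofList L).sz = (L.map BW.sz).sum + L.length := by
  induction L with
  | nil => rfl
  | cons a l ih => simp [BW.ofList, BW.sz, ih]; omega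

lemma sz_mem_lt {c : BW} {a : BW} (h : c ∈ a.toList) : c.sz < a.sz := by
  induction a with
  | top => simp [BW.toList] at h
  | cons x b ihx ihb =>
    simp [BW.toList] at h
    rcases h with rfl | h
    · simp [BW.sz]
    · have := ihb h; simp [BW.sz]; omega

lemma sz_pair_lt {c c' a : BW} (h : c ∈ a.toList) (h' : c' ∈ a.toList) (hne : c ≠ c') :
    c.sz + c'.sz < a.sz := by
  induction a with
  | top => simp [BW.toList] at h
  | cons x b ihx ihb =>
    simp [BW.toList] at h h'
    rcases h with rfl | h
    · rcases h' with rfl | h'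
      · exact absurd rfl hne
      · have := sz_mem_lt (a := b) h'; simp [BW.sz]; omega
    · rcases h' with rfl | h'
      · have := sz_mem_lt (a := b) h; simp [BW.sz]; omega
      · have := ihb h h'; simp [BW.sz]; omega

end BCAux
section BCDer

lemma bcLE_refl (a : BW) : bcLE a a := Or.inr (.id _)

lemma bcLE_top (a : BW) : bcLE .top a := Or.inr (by exact .topI _)

lemma monoLE {a b : BW} (h : bcLE b a) {φ ψ : BCF} (hφ : BCder φ ψ) :
    BCder (.dia a φ) (.dia b ψ) :=
  h.elim (fun h1 => .mono₁ a b hφ h1) (fun h2 => .mono₂ a b hφ h2)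

lemma transLE {a b : BW} (h : bcLE b a) {φ ψ : BCF} (hφ : BCder φ ψ) :
    BCder (.dia a (.dia b φ)) (.dia b ψ) :=
  h.elim (fun h1 => .trans₁ a b hφ h1) (fun h2 => .trans₂ a b hφ h2)

lemma derDown {a : BW} {φ ψ : BCF} (hφ : BCder φ ψ) :
    BCder (.dia a φ) (.dia .top ψ) := monoLE (bcLE_top a) hφ

lemma collapse {φ ψ : BCF} (hφ : BCder φ ψ) :
    BCder (.dia .top (.dia .top φ)) (.dia .top ψ) := transLE (bcLE_refl _) hφ

lemma bcLT_le_trans {x y z : BW} (h1 : bcLT x y) (h2 : bcLE y z) : bcLT x z := by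
  rcases h2 with h2 | h2
  · exact .cut (.cut h2 (monoLE (bcLE_refl _) h1)) (collapse (.id _))
  · exact .cut h2 h1

lemma bcLE_lt_trans {x y z : BW} (h1 : bcLE x y) (h2 : bcLT y z) : bcLT x z := by
  rcases h1 with h1 | h1
  · exact .cut (.cut h2 (monoLE (bcLE_refl _) h1)) (collapse (.id _))
  · exact .cut h2 (monoLE (bcLE_refl _) h1)

lemma bcLE_trans {x y z : BW} (h1 : bcLE x y) (h2 : bcLE y z) : bcLE x z := by
  rcases h2 with h2 | h2
  · exact Or.inl (bcLE_lt_trans h1 h2)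
  · rcases h1 with h1 | h1
    · exact Or.inl (.cut h2 h1)
    · exact Or.inr (.cut h2 h1)

lemma bcLT_bcLE {x y : BW} (h : bcLT x y) : bcLE x y := Or.inl h

/-- conj engine -/
lemma engine {Γ φ ψ : BCF} {a w : BW} (h1 : BCder Γ (.dia a φ)) (h2 : BCder Γ (.dia w ψ))
    (hw : bcLT w a) : BCder Γ (.dia a (.and φ (.dia w ψ))) :=
  .cut (.andI h1 h2) (.conj a w hw)

lemma LF_mono {φ ψ : BCF} (h : BCder φ ψ) (L : List BW) : BCder (LF L φ) (LF L ψ) := by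
  induction L with
  | nil => exact h
  | cons a l ih => exact .mono₂ a a ih (.id _)

lemma push {L : List BW} {w : BW} (hw : ∀ c ∈ L, bcLT w c) (φ χ : BCF) :
    BCder (.and (LF L φ) (.dia w χ)) (LF L (.and φ (.dia w χ))) := by
  induction L with
  | nil => exact .id _
  | cons a l ih =>
    have h1 : BCder (.and (.dia a (LF l φ)) (.dia w χ))
        (.dia a (.and (LF l φ) (.dia w χ))) := .conj a w (hw a (by simp))
    exact .cut h1 (.mono₂ a a (ih (fun c hc => hw c (by simp [hc]))) (.id _))

lemma bot {L : List BW} {y : BW} (hne : L ≠ []) (hy : ∀ c ∈ L, bcLE y c)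
    {φ ψ : BCF} (h : BCder φ ψ) : BCder (LF L φ) (.dia y ψ) := by
  induction L with
  | nil => exact absurd rfl hne
  | cons a l ih =>
    rcases l with _ | ⟨b, l'⟩
    · exact monoLE (hy a (by simp)) h
    · have ihh := ih (by simp) (fun c hc => hy c (by simp at hc ⊢; tauto))
      exact .cut (.mono₂ a a ihh (.id _)) (transLE (hy a (by simp)) (.id _))

lemma bot2 {L : List BW} {w : BW} (hw : ∀ c ∈ L, bcLE w c) {φ χ : BCF}
    (h : BCder φ (.dia w χ)) : BCder (LF L φ) (.dia w χ) := by
  induction L with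
  | nil => exact h
  | cons a l ih =>
    have ihh := ih (fun c hc => hw c (by simp [hc]))
    exact .cut (.mono₂ a a ihh (.id _)) (transLE (hw a (by simp)) (.id _))

end BCDer
section BelowDef

/-- `y` is `⊴` every element of `L`. -/
def Low (y : BW) (L : List BW) : Prop := ∀ c ∈ L, bcLE y c

/-- admissible wedge formulas over `L` -/
def Wdg (ψ : BCF) (L : List BW) : Prop :=
  ψ = .top ∨ ∃ w χ, ψ = .dia w χ ∧ Low w L

lemma Low.mono {y : BW} {L L' : List BW} (h : Low y L) (hsub : ∀ c ∈ L', c ∈ L) :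
    Low y L' := fun c hc => h c (hsub c hc)

lemma Wdg.mono {ψ : BCF} {L L' : List BW} (h : Wdg ψ L) (hsub : ∀ c ∈ L', c ∈ L) :
    Wdg ψ L' := by
  rcases h with h | ⟨w, χ, rfl, hw⟩
  · exact Or.inl h
  · exact Or.inr ⟨w, χ, rfl, hw.mono hsub⟩

/-- a wedge can be extracted through a chain whose components lie above its head -/
lemma chainDer {L : List BW} {ψ : BCF} (hψ : Wdg ψ L) {φ : BCF} (h : BCder φ ψ) :
    BCder (LF L φ) ψ := by
  rcases hψ with rfl | ⟨w, χ, rfl, hw⟩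
  · exact .topI _
  · exact bot2 hw h

/-- `a ⋖ b` : strong strict order on bracket worms. -/
def Below (a b : BW) : Prop :=
  ∀ (y : BW) (Θ ψ : BCF), Low y (a.toList ++ b.toList) → Wdg ψ (a.toList ++ b.toList) →
    BCder Θ ψ → BCder (LF b.toList Θ) (.dia y (LF a.toList ψ))

/-- `a ≈ b` : strong equivalence on bracket worms. -/
def Peq (a b : BW) : Prop :=
  ∀ (Θ ψ : BCF), Wdg ψ (a.toList ++ b.toList) → BCder Θ ψ →
    BCder (LF a.toList Θ) (LF b.toList ψ) ∧ BCder (LF b.toList Θ) (LF a.toList ψ)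

lemma low_top (L : List BW) : Low .top L := fun c _ => bcLE_top c

lemma wdg_top (L : List BW) : Wdg .top L := Or.inl rfl

lemma Below.bcLT {a b : BW} (h : Below a b) : bcLT a b := by
  have := h .top .top .top (low_top _) (wdg_top _) (.id _)
  show BCder b.toF (.dia .top a.toF)
  rw [toF_LF b, toF_LF a]
  exact this

lemma Peq.der₁ {a b : BW} (h : Peq a b) : BCder a.toF b.toF := by
  have := (h .top .top (wdg_top _) (.id _)).1
  rw [toF_LF a, toF_LF b]; exact this

lemma Peq.der₂ {a b : BW} (h : Peq a b) : BCder b.toF a.toF := by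
  have := (h .top .top (wdg_top _) (.id _)).2
  rw [toF_LF a, toF_LF b]; exact this

/-- trichotomy statement -/
def Tri (a b : BW) : Prop := Below a b ∨ Below b a ∨ Peq a b

lemma Below.swapLists {a b : BW} (h : Below a b) :
    ∀ (y : BW) (Θ ψ : BCF), Low y (b.toList ++ a.toList) → Wdg ψ (b.toList ++ a.toList) →
    BCder Θ ψ → BCder (LF b.toList Θ) (.dia y (LF a.toList ψ)) := by
  intro y Θ ψ hy hψ hΘ
  refine h y Θ ψ (hy.mono ?_) (hψ.mono ?_) hΘ <;> · intro c hc; simp at hc ⊢; tauto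

lemma Peq.symm {a b : BW} (h : Peq a b) : Peq b a := by
  intro Θ ψ hψ hΘ
  have := h Θ ψ (hψ.mono (by intro c hc; simp at hc ⊢; tauto)) hΘ
  exact ⟨this.2, this.1⟩

lemma Tri.symm {a b : BW} (h : Tri a b) : Tri b a := by
  rcases h with h | h | h
  · exact Or.inr (Or.inl h)
  · exact Or.inl h
  · exact Or.inr (Or.inr h.symm)

end BelowDef
section CoreLemmas

lemma LF_split (A : List BW) (x : BW) (T : List BW) (φ : BCF) :
    LF (A ++ x :: T) φ = LF A (.dia x (LF T φ)) := by
  rw [LF_append]; rfl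

/-- reshape: bring an already-derived wedge inside the chain, past the prefix `C`. -/
lemma reshape {Θ χ : BCF} {x : BW} {C R : List BW} (hC : C ≠ [])
    (hx : ∀ c ∈ C, bcLT x c)
    (hW : BCder (LF (C ++ R) Θ) (.dia x χ)) :
    BCder (LF (C ++ R) Θ) (LF C (.and (LF R Θ) (.dia x χ))) := by
  rcases C with _ | ⟨c₁, C'⟩
  · exact absurd rfl hC
  · have hform : LF ((c₁ :: C') ++ R) Θ = .dia c₁ (LF C' (LF R Θ)) := by
      show LF (c₁ :: (C' ++ R)) Θ = _
      simp only [LF, LF_append]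
    have h1 : BCder (LF ((c₁ :: C') ++ R) Θ)
        (.dia c₁ (.and (LF C' (LF R Θ)) (.dia x χ))) := by
      refine engine ?_ hW (hx c₁ (by simp))
      rw [hform]; exact .id _
    refine .cut h1 ?_
    show BCder _ (LF (c₁ :: C') (.and (LF R Θ) (.dia x χ)))
    exact .mono₂ c₁ c₁ (push (fun c hc => hx c (by simp [hc])) _ _) (.id _)

/-- CORE II : if `v ⊴ T` (the part of `u` after its first separator) then `v ⋖ u`. -/
lemma coreII {u v : BW} {A T : List BW} {x : BW}
    (hu : u.toList = A ++ x :: T)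
    (hTv : Below v (BW.ofList T) ∨ Peq (BW.ofList T) v) :
    Below v u := by
  intro y Θ ψ hy hψ hΘ
  have hsub1 : ∀ c ∈ v.toList ++ (BW.ofList T).toList, c ∈ v.toList ++ u.toList := by
    intro c hc; simp [hu, toList_ofList] at hc ⊢; tauto
  have hyAx : ∀ c ∈ A ++ [x], bcLE y c := by
    intro c hc
    refine hy c ?_
    simp [hu] at hc ⊢
    tauto
  have hgoal : LF u.toList Θ = LF (A ++ [x]) (LF T Θ) := by
    rw [hu, LF_split, LF_append]
    rfl
  rcases hTv with hTv | hTv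
  · have h1 : BCder (LF T Θ) (.dia y (LF v.toList ψ)) := by
      have := hTv y Θ ψ (hy.mono hsub1) (hψ.mono hsub1) hΘ
      rwa [toList_ofList] at this
    have h2 : BCder (LF (A ++ [x]) (LF T Θ)) (.dia y (.dia y (LF v.toList ψ))) :=
      bot (by simp) hyAx h1
    rw [hgoal]
    exact .cut h2 (transLE (bcLE_refl y) (.id _))
  · have hsub2 : ∀ c ∈ (BW.ofList T).toList ++ v.toList, c ∈ v.toList ++ u.toList := by
      intro c hc; simp [hu, toList_ofList] at hc ⊢; tauto
    have h1 : BCder (LF T Θ) (LF v.toList ψ) := by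
      have := (hTv Θ ψ (hψ.mono hsub2) hΘ).1
      rwa [toList_ofList] at this
    rw [hgoal]
    exact bot (by simp) hyAx h1

/-- CORE IIb : if `v ⋖ A` (the high prefix of `u`) then `v ⋖ u`. -/
lemma coreIIb {u v : BW} {A T : List BW} {x : BW}
    (hu : u.toList = A ++ x :: T)
    (hvA : Below v (BW.ofList A)) :
    Below v u := by
  intro y Θ ψ hy hψ hΘ
  have hsub1 : ∀ c ∈ v.toList ++ (BW.ofList A).toList, c ∈ v.toList ++ u.toList := by
    intro c hc; simp [hu, toList_ofList] at hc ⊢; tauto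
  have hxT : Wdg ψ (x :: T) := by
    refine hψ.mono ?_
    intro c hc; simp [hu] at hc ⊢; tauto
  have h1 : BCder (LF (x :: T) Θ) ψ := chainDer hxT hΘ
  have h2 := hvA y (LF (x :: T) Θ) ψ (hy.mono hsub1) (hψ.mono hsub1) h1
  rw [toList_ofList] at h2
  have hgoal : LF u.toList Θ = LF A (LF (x :: T) Θ) := by rw [hu, LF_append]
  rw [hgoal]
  exact h2

/-- CORE I : `A ⋖ C` (high blocks) and `T ⋖ v` give `u ⋖ v`. -/
lemma coreI {u v : BW} {A T C R : List BW} {x : BW}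
    (hu : u.toList = A ++ x :: T)
    (hv : v.toList = C ++ R)
    (hTv : Below (BW.ofList T) v)
    (hAC : Below (BW.ofList A) (BW.ofList C))
    (hxall : ∀ c ∈ u.toList ++ v.toList, bcLE x c)
    (hxC : ∀ c ∈ C, bcLT x c) :
    Below u v := by
  intro y Θ ψ hy hψ hΘ
  have hsubT : ∀ c ∈ (BW.ofList T).toList ++ v.toList, c ∈ u.toList ++ v.toList := by
    intro c hc; simp [hu, toList_ofList] at hc ⊢; tauto
  have hsubAC : ∀ c ∈ (BW.ofList A).toList ++ (BW.ofList C).toList,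
      c ∈ u.toList ++ v.toList := by
    intro c hc; simp [hu, hv, toList_ofList] at hc ⊢; tauto
  -- the wedge
  have i1 : BCder (LF v.toList Θ) (.dia x (LF T ψ)) := by
    have := hTv x Θ ψ (fun c hc => hxall c (hsubT c hc)) (hψ.mono hsubT) hΘ
    rwa [toList_ofList] at this
  have hWdgW : Wdg (.dia x (LF T ψ)) ((BW.ofList A).toList ++ (BW.ofList C).toList) :=
    Or.inr ⟨x, LF T ψ, rfl, fun c hc => hxall c (hsubAC c hc)⟩
  have hgoal : LF u.toList ψ = LF A (.dia x (LF T ψ)) := by rw [hu, LF_split]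
  rcases eq_or_ne C [] with rfl | hC
  · have h2 := hAC y (LF v.toList Θ) (.dia x (LF T ψ)) (fun c hc => hy c (hsubAC c hc))
      hWdgW i1
    rw [toList_ofList, toList_ofList] at h2
    rw [hgoal]
    exact h2
  · have i1' : BCder (LF (C ++ R) Θ) (.dia x (LF T ψ)) := by rwa [hv] at i1
    have h2 := reshape hC hxC i1'
    have h3 := hAC y (.and (LF R Θ) (.dia x (LF T ψ))) (.dia x (LF T ψ))
      (fun c hc => hy c (hsubAC c hc)) hWdgW (.andE₂ _ _)
    rw [toList_ofList, toList_ofList] at h3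
    rw [hgoal]
    have h4 := BCder.cut h2 h3
    rwa [← hv] at h4
end CoreLemmas
section CorePeq

/-- CORE III : both split, equivalent high blocks, mutual tail-dominations give `u ≈ v`. -/
lemma corePeq1 {u v : BW} {A T C V : List BW} {x y' : BW}
    (hu : u.toList = A ++ x :: T) (hv : v.toList = C ++ y' :: V)
    (hTv : Below (BW.ofList T) v) (hVu : Below (BW.ofList V) u)
    (hAC : Peq (BW.ofList A) (BW.ofList C))
    (hxall : ∀ c ∈ u.toList ++ v.toList, bcLE x c)
    (hy'all : ∀ c ∈ u.toList ++ v.toList, bcLE y' c)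
    (hxC : ∀ c ∈ C, bcLT x c) (hy'A : ∀ a ∈ A, bcLT y' a) : Peq u v := by
  intro Θ ψ hψ hΘ
  have hsubT : ∀ c ∈ (BW.ofList T).toList ++ v.toList, c ∈ u.toList ++ v.toList := by
    intro c hc; simp [hu, toList_ofList] at hc ⊢; tauto
  have hsubV : ∀ c ∈ (BW.ofList V).toList ++ u.toList, c ∈ u.toList ++ v.toList := by
    intro c hc; simp [hv, toList_ofList] at hc ⊢; tauto
  have hsubAC : ∀ c ∈ (BW.ofList A).toList ++ (BW.ofList C).toList,
      c ∈ u.toList ++ v.toList := by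
    intro c hc; simp [hu, hv, toList_ofList] at hc ⊢; tauto
  constructor
  · -- dir 1 : u-side proves v-side
    have j1 : BCder (LF u.toList Θ) (.dia y' (LF V ψ)) := by
      have := hVu y' Θ ψ (fun c hc => hy'all c (hsubV c hc)) (hψ.mono hsubV) hΘ
      rwa [toList_ofList] at this
    have hWdgWv : Wdg (.dia y' (LF V ψ)) ((BW.ofList A).toList ++ (BW.ofList C).toList) :=
      Or.inr ⟨y', LF V ψ, rfl, fun c hc => hy'all c (hsubAC c hc)⟩
    have hgoal : LF v.toList ψ = LF C (.dia y' (LF V ψ)) := by rw [hv, LF_split]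
    rcases eq_or_ne A [] with rfl | hA
    · have h2 := (hAC (LF u.toList Θ) (.dia y' (LF V ψ)) hWdgWv j1).1
      rw [toList_ofList, toList_ofList] at h2
      rw [hgoal]
      exact h2
    · have j1' : BCder (LF (A ++ (x :: T)) Θ) (.dia y' (LF V ψ)) := by rwa [hu] at j1
      have h2 := reshape hA hy'A j1'
      have h3 := (hAC (.and (LF (x :: T) Θ) (.dia y' (LF V ψ))) (.dia y' (LF V ψ))
        hWdgWv (.andE₂ _ _)).1
      rw [toList_ofList, toList_ofList] at h3
      rw [hgoal]
      have h4 := BCder.cut h2 h3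
      rwa [← hu] at h4
  · -- dir 2 : v-side proves u-side
    have k1 : BCder (LF v.toList Θ) (.dia x (LF T ψ)) := by
      have := hTv x Θ ψ (fun c hc => hxall c (hsubT c hc)) (hψ.mono hsubT) hΘ
      rwa [toList_ofList] at this
    have hWdgW : Wdg (.dia x (LF T ψ)) ((BW.ofList A).toList ++ (BW.ofList C).toList) :=
      Or.inr ⟨x, LF T ψ, rfl, fun c hc => hxall c (hsubAC c hc)⟩
    have hgoal : LF u.toList ψ = LF A (.dia x (LF T ψ)) := by rw [hu, LF_split]
    rcases eq_or_ne C [] with rfl | hC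
    · have h2 := (hAC (LF v.toList Θ) (.dia x (LF T ψ)) hWdgW k1).2
      rw [toList_ofList, toList_ofList] at h2
      rw [hgoal]
      exact h2
    · have k1' : BCder (LF (C ++ (y' :: V)) Θ) (.dia x (LF T ψ)) := by rwa [hv] at k1
      have h2 := reshape hC hxC k1'
      have h3 := (hAC (.and (LF (y' :: V) Θ) (.dia x (LF T ψ))) (.dia x (LF T ψ))
        hWdgW (.andE₂ _ _)).2
      rw [toList_ofList, toList_ofList] at h3
      rw [hgoal]
      have h4 := BCder.cut h2 h3
      rwa [← hv] at h4

/-- CORE III' : `u` splits, `v` is high, `A ≈ v`, `T ⋖ v` give `u ≈ v`. -/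
lemma corePeq2 {u v : BW} {A T : List BW} {x : BW}
    (hu : u.toList = A ++ x :: T) (hvne : v.toList ≠ [])
    (hTv : Below (BW.ofList T) v) (hAv : Peq (BW.ofList A) v)
    (hxall : ∀ c ∈ u.toList ++ v.toList, bcLE x c)
    (hxV : ∀ c ∈ v.toList, bcLT x c) : Peq u v := by
  intro Θ ψ hψ hΘ
  have hsubT : ∀ c ∈ (BW.ofList T).toList ++ v.toList, c ∈ u.toList ++ v.toList := by
    intro c hc; simp [hu, toList_ofList] at hc ⊢; tauto
  have hsubAv : ∀ c ∈ (BW.ofList A).toList ++ v.toList, c ∈ u.toList ++ v.toList := by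
    intro c hc; simp [hu, toList_ofList] at hc ⊢; tauto
  have hsubxT : ∀ c ∈ (x :: T), c ∈ u.toList ++ v.toList := by
    intro c hc; simp [hu] at hc ⊢; tauto
  constructor
  · -- dir 1
    have h1 : BCder (LF (x :: T) Θ) ψ := chainDer (hψ.mono hsubxT) hΘ
    have h2 := (hAv (LF (x :: T) Θ) ψ (hψ.mono hsubAv) h1).1
    rw [toList_ofList] at h2
    have hgoal : LF u.toList Θ = LF A (LF (x :: T) Θ) := by rw [hu, LF_append]
    rw [hgoal]
    exact h2
  · -- dir 2
    have k1 : BCder (LF v.toList Θ) (.dia x (LF T ψ)) := by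
      have := hTv x Θ ψ (fun c hc => hxall c (hsubT c hc)) (hψ.mono hsubT) hΘ
      rwa [toList_ofList] at this
    have k1' : BCder (LF (v.toList ++ []) Θ) (.dia x (LF T ψ)) := by
      rwa [List.append_nil]
    have h2 := reshape hvne hxV k1'
    have h3 := (hAv (.and (LF ([] : List BW) Θ) (.dia x (LF T ψ))) (.dia x (LF T ψ))
      (Or.inr ⟨x, LF T ψ, rfl, fun c hc => hxall c (hsubAv c hc)⟩) (.andE₂ _ _)).2
    rw [toList_ofList] at h3
    have hgoal : LF u.toList ψ = LF A (.dia x (LF T ψ)) := by rw [hu, LF_split]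
    rw [hgoal]
    have h4 := BCder.cut h2 h3
    rwa [List.append_nil] at h4

end CorePeq
section Selection

lemma toList_ne_nil {a : BW} (h : a ≠ .top) : a.toList ≠ [] := by
  cases a with
  | top => exact absurd rfl h
  | cons x b => simp [BW.toList]

lemma sz_eq_zero {a : BW} (h : a.sz = 0) : a = .top := by
  cases a with
  | top => rfl
  | cons x b => simp [BW.sz] at h

lemma szT_lt {u : BW} {A : List BW} {x : BW} {T : List BW} (hu : u.toList = A ++ x :: T) :
    (BW.ofList T).sz < u.sz := by
  conv_rhs => rw [← ofList_toList u, hu]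
  simp [sz_ofList, List.map_append, List.sum_append, List.length_append]
  omega

lemma szA_lt {u : BW} {A : List BW} {x : BW} {T : List BW} (hu : u.toList = A ++ x :: T) :
    (BW.ofList A).sz < u.sz := by
  conv_rhs => rw [← ofList_toList u, hu]
  simp [sz_ofList, List.map_append, List.sum_append, List.length_append]
  omega

lemma pairSz {u v a b : BW} (ha : a ∈ u.toList ++ v.toList) (hb : b ∈ u.toList ++ v.toList)
    (hne : a ≠ b) : a.sz + b.sz < u.sz + v.sz := by
  rw [List.mem_append] at ha hb
  rcases ha with ha | ha <;> rcases hb with hb | hb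
  · have := sz_pair_lt ha hb hne; omega
  · have := sz_mem_lt ha; have := sz_mem_lt hb; omega
  · have := sz_mem_lt ha; have := sz_mem_lt hb; omega
  · have := sz_pair_lt ha hb hne; omega

lemma select_min (S : List BW) (hne : S ≠ [])
    (htri : ∀ a ∈ S, ∀ b ∈ S, a ≠ b → Tri a b) :
    ∃ m, m ∈ S ∧ ∀ c ∈ S, bcLE m c := by
  induction S with
  | nil => exact absurd rfl hne
  | cons a S' ih =>
    rcases eq_or_ne S' [] with rfl | hS'
    · refine ⟨a, by simp, ?_⟩
      intro c hc; simp at hc; subst hc; exact bcLE_refl _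
    · obtain ⟨m, hmS', hmin⟩ := ih hS' (fun x hx y hy => htri x (by simp [hx]) y (by simp [hy]))
      by_cases ham : a = m
      · refine ⟨m, by simp [hmS'], ?_⟩
        intro c hc
        rcases List.mem_cons.1 hc with rfl | hc
        · rw [← ham]; subst ham; exact bcLE_refl _
        · exact hmin c hc
      · rcases htri a (by simp) m (by simp [hmS']) ham with hb | hb | hb
        · refine ⟨a, by simp, ?_⟩
          intro c hc
          rcases List.mem_cons.1 hc with rfl | hc
          · exact bcLE_refl _
          · exact bcLE_trans (bcLT_bcLE hb.bcLT) (hmin c hc)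
        · refine ⟨m, by simp [hmS'], ?_⟩
          intro c hc
          rcases List.mem_cons.1 hc with rfl | hc
          · exact bcLT_bcLE hb.bcLT
          · exact hmin c hc
        · refine ⟨m, by simp [hmS'], ?_⟩
          intro c hc
          rcases List.mem_cons.1 hc with rfl | hc
          · exact Or.inr hb.der₁
          · exact hmin c hc

lemma scan (m : BW) (L : List BW) (hinfo : ∀ c ∈ L, c = m ∨ (c ≠ m ∧ Tri m c)) :
    ((∀ c ∈ L, Below m c) ∧ m ∉ L) ∨
      ∃ A x T, L = A ++ x :: T ∧ (∀ a ∈ A, Below m a) ∧ bcLE x m := by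
  induction L with
  | nil => exact Or.inl ⟨by simp, by simp⟩
  | cons c L' ih =>
    rcases hinfo c (by simp) with hcm | ⟨hne, htri⟩
    · exact Or.inr ⟨[], c, L', by simp, by simp, hcm ▸ bcLE_refl _⟩
    · rcases htri with h1 | h2 | h3
      · rcases ih (fun d hd => hinfo d (by simp [hd])) with ⟨hall, hnm⟩ | ⟨A, x, T, rfl, hA, hx⟩
        · refine Or.inl ⟨?_, ?_⟩
          · intro d hd
            rcases List.mem_cons.1 hd with rfl | hd
            · exact h1
            · exact hall d hd
          · simp; exact ⟨fun h => hne h.symm, hnm⟩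
        · refine Or.inr ⟨c :: A, x, T, by simp, ?_, hx⟩
          intro a ha
          rcases List.mem_cons.1 ha with rfl | ha
          · exact h1
          · exact hA a ha
      · exact Or.inr ⟨[], c, L', by simp, by simp, bcLT_bcLE h2.bcLT⟩
      · exact Or.inr ⟨[], c, L', by simp, by simp, Or.inr h3.der₁⟩

end Selection
section Main

lemma peq_top_top : Peq .top .top := fun _ _ _ hΘ => ⟨hΘ, hΘ⟩

lemma belowTop {v : BW} (hv : v.toList ≠ []) : Below .top v := by
  intro y Θ ψ hy hψ hΘ
  exact bot hv (fun c hc => hy c (by simp [BW.toList, hc])) hΘ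

lemma mainCase {u v : BW} {A T : List BW} {x m : BW}
    (hu : u.toList = A ++ x :: T)
    (hA : ∀ a ∈ A, Below m a) (hx : bcLE x m)
    (hmall : ∀ c ∈ u.toList ++ v.toList, bcLE m c)
    (hvne : v.toList ≠ [])
    (vscan : ((∀ c ∈ v.toList, Below m c) ∧ m ∉ v.toList) ∨
      ∃ C y' V, v.toList = C ++ y' :: V ∧ (∀ c ∈ C, Below m c) ∧ bcLE y' m)
    (ih : ∀ u' v' : BW, u'.sz + v'.sz < u.sz + v.sz → Tri u' v') :
    Tri u v := by
  have hxall : ∀ c ∈ u.toList ++ v.toList, bcLE x c :=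
    fun c hc => bcLE_trans hx (hmall c hc)
  have R1 : Tri (BW.ofList T) v := ih _ _ (by have := szT_lt hu; omega)
  rcases vscan with ⟨hvhigh, _⟩ | ⟨C, y', V, hv, hC, hy'⟩
  · -- v is entirely high
    have hxV : ∀ c ∈ v.toList, bcLT x c :=
      fun c hc => bcLE_lt_trans hx (hvhigh c hc).bcLT
    rcases R1 with hTv | hvT | hP
    · -- T ⋖ v ; compare A with v
      have R3 : Tri (BW.ofList A) v := ih _ _ (by have := szA_lt hu; omega)
      rcases R3 with hAv | hvA | hPA
      · -- A ⋖ v : u ⋖ v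
        refine Or.inl (coreI (R := []) hu (by simp) hTv ?_ hxall hxV)
        rw [ofList_toList]; exact hAv
      · exact Or.inr (Or.inl (coreIIb hu hvA))
      · exact Or.inr (Or.inr (corePeq2 hu hvne hTv hPA hxall hxV))
    · exact Or.inr (Or.inl (coreII hu (Or.inl hvT)))
    · exact Or.inr (Or.inl (coreII hu (Or.inr hP)))
  · -- v splits as C ++ y' :: V
    have hy'all : ∀ c ∈ u.toList ++ v.toList, bcLE y' c :=
      fun c hc => bcLE_trans hy' (hmall c hc)
    have hxC : ∀ c ∈ C, bcLT x c :=
      fun c hc => bcLE_lt_trans hx (hC c hc).bcLT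
    have hy'A : ∀ a ∈ A, bcLT y' a :=
      fun a ha => bcLE_lt_trans hy' (hA a ha).bcLT
    rcases R1 with hTv | hvT | hP
    · -- T ⋖ v ; compare V with u
      have R2 : Tri (BW.ofList V) u := ih _ _ (by have := szT_lt hv; omega)
      rcases R2 with hVu | huV | hPV
      · -- V ⋖ u ; compare the blocks A, C
        have R3 : Tri (BW.ofList A) (BW.ofList C) :=
          ih _ _ (by have := szA_lt hu; have := szA_lt hv; omega)
        rcases R3 with hAC | hCA | hPAC
        · exact Or.inl (coreI hu hv hTv hAC hxall hxC)
        · refine Or.inr (Or.inl (coreI hv hu hVu hCA ?_ hy'A))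
          intro c hc
          refine hy'all c ?_
          rw [List.mem_append] at hc ⊢; tauto
        · refine Or.inr (Or.inr (corePeq1 hu hv hTv hVu hPAC hxall hy'all hxC hy'A))
      · exact Or.inl (coreII hv (Or.inl huV))
      · exact Or.inl (coreII hv (Or.inr hPV))
    · exact Or.inr (Or.inl (coreII hu (Or.inl hvT)))
    · exact Or.inr (Or.inl (coreII hu (Or.inr hP)))

theorem triN : ∀ (N : ℕ) (u v : BW), u.sz + v.sz ≤ N → Tri u v := by
  intro N
  induction N with
  | zero =>
    intro u v h
    have hu : u = .top := sz_eq_zero (by omega)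
    have hv : v = .top := sz_eq_zero (by omega)
    subst hu; subst hv
    exact Or.inr (Or.inr peq_top_top)
  | succ N ihN =>
    intro u v hsz
    rcases eq_or_ne u .top with rfl | hune
    · rcases eq_or_ne v .top with rfl | hvne
      · exact Or.inr (Or.inr peq_top_top)
      · exact Or.inl (belowTop (toList_ne_nil hvne))
    · rcases eq_or_ne v .top with rfl | hvne
      · exact Or.inr (Or.inl (belowTop (toList_ne_nil hune)))
      · -- main case
        have hSne : u.toList ++ v.toList ≠ [] := by
          simp [toList_ne_nil hune]
        have htriP : ∀ a ∈ u.toList ++ v.toList, ∀ b ∈ u.toList ++ v.toList,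
            a ≠ b → Tri a b := by
          intro a ha b hb hne
          exact ihN a b (by have := pairSz ha hb hne; omega)
        obtain ⟨m, hmS, hmin⟩ := select_min _ hSne htriP
        have hinfo_u : ∀ c ∈ u.toList, c = m ∨ (c ≠ m ∧ Tri m c) := by
          intro c hc
          by_cases h : c = m
          · exact Or.inl h
          · refine Or.inr ⟨h, ihN m c ?_⟩
            have := pairSz hmS (List.mem_append.2 (Or.inl hc)) (Ne.symm h)
            omega
        have hinfo_v : ∀ c ∈ v.toList, c = m ∨ (c ≠ m ∧ Tri m c) := by
          intro c hc
          by_cases h : c = m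
          · exact Or.inl h
          · refine Or.inr ⟨h, ihN m c ?_⟩
            have := pairSz hmS (List.mem_append.2 (Or.inr hc)) (Ne.symm h)
            omega
        have ih' : ∀ u' v' : BW, u'.sz + v'.sz < u.sz + v.sz → Tri u' v' :=
          fun u' v' h => ihN u' v' (by omega)
        rcases scan m u.toList hinfo_u with ⟨huhigh, hmnotu⟩ | ⟨A, x, T, hu, hA, hx⟩
        · rcases scan m v.toList hinfo_v with ⟨_, hmnotv⟩ | ⟨C, y', V, hv, hC, hy'⟩
          · exfalso
            rcases List.mem_append.1 hmS with h | h
            · exact hmnotu h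
            · exact hmnotv h
          · have hmall' : ∀ c ∈ v.toList ++ u.toList, bcLE m c := by
              intro c hc; refine hmin c ?_; rw [List.mem_append] at hc ⊢; tauto
            have := mainCase hv hC hy' hmall' (toList_ne_nil hune)
              (Or.inl ⟨huhigh, hmnotu⟩)
              (fun u' v' h => ihN u' v' (by omega))
            exact this.symm
        · exact mainCase hu hA hx hmin (toList_ne_nil hvne)
            (scan m v.toList hinfo_v) ih'

theorem tri (u v : BW) : Tri u v := triN (u.sz + v.sz) u v le_rfl

/-- Linearity of the bracket worm ordering. -/
theorem bc_linear (u v : BW) : bcLT u v ∨ bcLE v u := by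
  rcases tri u v with h | h | h
  · exact Or.inl h.bcLT
  · exact Or.inr (bcLT_bcLE h.bcLT)
  · exact Or.inr (Or.inr h.der₁)

end Main
section FsUnfold

lemma fs_cons_spec (a₁ rest : BW) (n : ℕ) (h : ¬ a₁ = .top) :
    ∃ j, j ≤ rest.toList.length ∧
      (∀ i, i < j → ¬ bcLT (rest.toList.getD i .top) a₁) ∧
      (j < rest.toList.length → bcLT (rest.toList.getD j .top) a₁) ∧
      BW.fs (.cons a₁ rest) n =
        BW.ofList ((List.replicate (n + 1) (BW.fs a₁ n :: rest.toList.take j)).flatten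
          ++ rest.toList.drop j) := by
  classical
  simp only [BW.fs, if_neg h]
  split
  case isTrue hex =>
    refine ⟨Nat.find hex, (Nat.find_spec hex).1.le, ?_, fun _ => (Nat.find_spec hex).2, rfl⟩
    intro i hi hlt
    exact Nat.find_min hex hi ⟨hi.trans (Nat.find_spec hex).1, hlt⟩
  case isFalse hnex =>
    refine ⟨rest.toList.length, le_rfl, ?_, fun hc => absurd hc (lt_irrefl _), rfl⟩
    intro i hi hlt
    exact hnex ⟨i, hi, hlt⟩

end FsUnfold
section FsMain

lemma fs_lt_aux : ∀ (N : ℕ) (a : BW), a.sz ≤ N → ∀ n, a ≠ .top → bcLT (a.fs n) a := by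
  intro N
  induction N with
  | zero =>
    intro a ha n h
    exact absurd (sz_eq_zero (by omega)) h
  | succ N ih =>
    intro a ha n hne
    cases a with
    | top => exact absurd rfl hne
    | cons a₁ rest =>
      by_cases h₁ : a₁ = .top
      · subst h₁
        show BCder (BW.cons .top rest).toF (.dia .top (((BW.cons .top rest).fs n)).toF)
        have hfs0 : (BW.cons BW.top rest).fs n = rest := by simp [BW.fs]
        rw [hfs0]
        exact .id _
      · obtain ⟨j, hjle, hjmin, hjlt, hfs⟩ := fs_cons_spec a₁ rest n h₁
        set L := rest.toList with hL
        set t := L.take j with ht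
        set c := L.drop j with hc
        set x := BW.fs a₁ n with hxdef
        have hx : bcLT x a₁ := by
          refine ih a₁ ?_ n h₁
          have : (BW.cons a₁ rest).sz = a₁.sz + rest.sz + 1 := rfl
          omega
        have htc : t ++ c = L := List.take_append_drop j L
        have hta : ∀ p ∈ t, bcLE a₁ p := by
          intro p hp
          obtain ⟨i, hi, hgeti⟩ := List.getElem_of_mem hp
          have hilen : i < L.length := by
            have h' := hi
            simp only [ht, List.length_take] at h'
            omega
          have hij : i < j := by
            have h' := hi
            simp only [ht, List.length_take] at h'
            omega
          have hgetL : L.getD i .top = p := by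
            rw [List.getD_eq_getElem _ _ hilen, ← hgeti]
            exact List.getElem_take.symm
          have hnlt : ¬ bcLT p a₁ := by
            have h' := hjmin i hij
            rwa [hgetL] at h'
          rcases bc_linear p a₁ with hlt | hle
          · exact absurd hlt hnlt
          · exact hle
        have hxt : ∀ p ∈ t, bcLT x p := fun p hp => bcLT_le_trans hx (hta p hp)
        have haF : (BW.cons a₁ rest).toF = .dia a₁ (LF t (LF c .top)) := by
          show BCF.dia a₁ rest.toF = _
          rw [toF_LF rest, ← hL, ← htc, LF_append]
        have hcgood : c = [] ∨ ∃ h₀ c', c = h₀ :: c' ∧ bcLT h₀ a₁ := by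
          rcases Nat.lt_or_ge j L.length with hj | hj
          · right
            refine ⟨L[j], L.drop (j+1), ?_, ?_⟩
            · rw [hc]; exact List.drop_eq_getElem_cons hj
            · have h' := hjlt hj
              rwa [List.getD_eq_getElem _ _ hj] at h'
          · left
            rw [hc]; exact List.drop_eq_nil_of_le hj
        -- the key induction on the number of copies
        have S : ∀ k, BCder (BW.cons a₁ rest).toF
              (LF ((List.replicate k (x :: t)).flatten ++ c) .top) ∧
            ((List.replicate k (x :: t)).flatten ++ c = [] ∨
              ∃ hd tl, (List.replicate k (x :: t)).flatten ++ c = hd :: tl ∧ bcLT hd a₁) := by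
          intro k
          induction k with
          | zero =>
            have h0 : (List.replicate 0 (x :: t)).flatten ++ c = c := by simp
            rw [h0]
            constructor
            · rcases hcgood with hcnil | ⟨h₀, c', hceq, hlt₀⟩
              · rw [hcnil]; exact .topI _
              · rw [haF, hceq]
                show BCder (.dia a₁ (LF t (LF (h₀ :: c') .top))) (.dia h₀ (LF c' .top))
                have inner : BCder (LF t (LF (h₀ :: c') .top)) (.dia h₀ (LF c' .top)) :=
                  bot2 (fun p hp => bcLT_bcLE (bcLT_le_trans hlt₀ (hta p hp))) (.id _)
                exact .cut (.mono₂ a₁ a₁ inner (.id _)) (transLE (bcLT_bcLE hlt₀) (.id _))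
            · rcases hcgood with hcnil | ⟨h₀, c', hceq, hlt₀⟩
              · exact Or.inl hcnil
              · exact Or.inr ⟨h₀, c', hceq, hlt₀⟩
          | succ k ihk =>
            obtain ⟨hSk, hGk⟩ := ihk
            have hlist : (List.replicate (k+1) (x :: t)).flatten ++ c =
                x :: (t ++ ((List.replicate k (x :: t)).flatten ++ c)) := by
              rw [List.replicate_succ, List.flatten_cons, List.append_assoc]
              rfl
            constructor
            · rw [hlist]
              show BCder _ (.dia x (LF (t ++ ((List.replicate k (x :: t)).flatten ++ c)) .top))
              rw [LF_append]
              rcases hGk with hnil | ⟨hd, tl, heq, hlthd⟩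
              · rw [hnil]
                have hcnil : c = [] := (List.append_eq_nil_iff.1 hnil).2
                rw [haF, hcnil]
                exact .mono₁ a₁ x (.id _) hx
              · have hSk' : BCder (BW.cons a₁ rest).toF (.dia hd (LF tl .top)) := by
                  rw [heq] at hSk
                  exact hSk
                have step1 : BCder (BW.cons a₁ rest).toF
                    (.dia a₁ (.and (LF t (LF c .top)) (.dia hd (LF tl .top)))) := by
                  refine engine ?_ hSk' hlthd
                  rw [haF]; exact .id _
                have step2 : BCder (.and (LF t (LF c .top)) (.dia hd (LF tl .top)))
                    (LF t (.dia hd (LF tl .top))) :=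
                  .cut (push (fun p hp => bcLT_le_trans hlthd (hta p hp)) _ _)
                    (LF_mono (.andE₂ _ _) t)
                have step4 : BCder (BW.cons a₁ rest).toF
                    (.dia x (LF t (.dia hd (LF tl .top)))) :=
                  .cut (.cut step1 (.mono₂ a₁ a₁ step2 (.id _))) (.mono₁ a₁ x (.id _) hx)
                rw [heq]
                exact step4
            · exact Or.inr ⟨x, t ++ ((List.replicate k (x :: t)).flatten ++ c), hlist, hx⟩
        -- final strictness
        have hS := (S (n+1)).1
        have hlist : (List.replicate (n+1) (x :: t)).flatten ++ c =
            x :: (t ++ ((List.replicate n (x :: t)).flatten ++ c)) := by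
          rw [List.replicate_succ, List.flatten_cons, List.append_assoc]
          rfl
        show BCder (BW.cons a₁ rest).toF (.dia .top ((BW.fs (.cons a₁ rest) n)).toF)
        rw [hfs]
        have hofl : (BW.ofList ((List.replicate (n+1) (x :: t)).flatten ++ c)).toF
            = LF ((List.replicate (n+1) (x :: t)).flatten ++ c) .top := by
          rw [toF_LF, toList_ofList]
        rw [hofl, hlist]
        show BCder _ (.dia .top (.dia x
          (LF (t ++ ((List.replicate n (x :: t)).flatten ++ c)) .top)))
        have hS' : BCder (BW.cons a₁ rest).toF
            (.dia x (LF (t ++ ((List.replicate n (x :: t)).flatten ++ c)) .top)) := by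
          rw [hlist] at hS
          exact hS
        have step1 : BCder (BW.cons a₁ rest).toF
            (.dia a₁ (.and (LF t (LF c .top))
              (.dia x (LF (t ++ ((List.replicate n (x :: t)).flatten ++ c)) .top)))) := by
          refine engine ?_ hS' hx
          rw [haF]; exact .id _
        exact .cut step1 (derDown (.andE₂ _ _))

end FsMain

/-- For every bracket worm `a ≠ ⊤` and every `n`, `a{n} ◁ a`,
i.e. `a ⊢_BC (⊤)(a{n})`. -/
theorem fs_lt (a : BW) (n : ℕ) (h : a ≠ .top) : bcLT (a.fs n) a := by
  exact fs_lt_aux a.sz a le_rfl n h
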